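/- arXiv:1007.0526 — 5 statements merged into one kernel-verified Lean document; each statement's English description precedes it below -/
import Mathlib

section
/- Let (p_i)_{i≥1} be a sequence in a commutative ring, and define (a_n) by a_1 = 1 and a_{n+1} = Σ_{i=1}^{n} p_{n-i+1} a_i. Let P_n be the n×n upper Hessenberg Toeplitz matrix with (P_n)_{i,j} = p_{j-i+1} for j ≥ i, -1 for i = j+1, and 0 otherwise. Then for 0 ≤ k ≤ n, the sum S_{n-k} of all principal minors of P_n of order n-k equals Σ_{j_1 + j_2 + ... + j_{k+1} = n-k, j_t ≥ 0} a_{j_1+1} a_{j_2+1} ... a_{j_{k+1}+1}. -/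
/-- The n×n upper Hessenberg Toeplitz matrix built from the sequence `p`. -/
def hessP {R : Type*} [CommRing R] (p : ℕ → R) (n : ℕ) : Matrix (Fin n) (Fin n) R :=
  Matrix.of fun i j =>
    if (i : ℕ) ≤ (j : ℕ) then p ((j : ℕ) - (i : ℕ) + 1)
    else if (i : ℕ) = (j : ℕ) + 1 then -1 else 0

namespace HessAux

variable {R : Type*} [CommRing R]

/-- entry function on ℕ -/
def gE (p : ℕ → R) (i j : ℕ) : R :=
  if i ≤ j then p (j - i + 1) else if i = j + 1 then -1 else 0

lemma gE_zero (p : ℕ → R) {i j : ℕ} (h : j + 1 < i) : gE p i j = 0 := by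
  unfold gE; rw [if_neg (by omega), if_neg (by omega)]

lemma gE_shift (p : ℕ → R) (c i j : ℕ) : gE p (c + i) (c + j) = gE p i j := by
  unfold gE
  have h1 : c + i ≤ c + j ↔ i ≤ j := by omega
  have h2 : c + j - (c + i) = j - i := by omega
  have h3 : (c + i = c + j + 1) ↔ (i = j + 1) := by omega
  simp only [h1, h2, h3]

/-- determinant of the matrix with entries `gE p (u i) (v j)` -/
def D2 (p : ℕ → R) {m : ℕ} (u v : Fin m → ℕ) : R :=
  (Matrix.of fun i j => gE p (u i) (v j)).det

lemma D2_shift (p : ℕ → R) {m : ℕ} (c : ℕ) (u v : Fin m → ℕ) :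
    D2 p (fun i => c + u i) (fun j => c + v j) = D2 p u v := by
  unfold D2
  congr 1
  ext i j
  exact gE_shift p c (u i) (v j)

lemma D2_cast (p : ℕ → R) {m m' : ℕ} (h : m' = m) (u v : Fin m → ℕ) :
    D2 p (u ∘ Fin.cast h) (v ∘ Fin.cast h) = D2 p u v := by
  unfold D2
  rw [← Matrix.det_submatrix_equiv_self (finCongr h)
    (Matrix.of fun i j => gE p (u i) (v j))]
  rfl

lemma D2_split (p : ℕ → R) {m₁ m₂ : ℕ} (u v : Fin (m₁ + m₂) → ℕ)
    (hz : ∀ (i : Fin m₂) (j : Fin m₁),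
      v (Fin.castAdd m₂ j) + 1 < u (Fin.natAdd m₁ i)) :
    D2 p u v = D2 p (u ∘ Fin.castAdd m₂) (v ∘ Fin.castAdd m₂)
      * D2 p (u ∘ Fin.natAdd m₁) (v ∘ Fin.natAdd m₁) := by
  unfold D2
  rw [← Matrix.det_submatrix_equiv_self finSumFinEquiv
    (Matrix.of fun i j => gE p (u i) (v j))]
  have : ((Matrix.of fun i j => gE p (u i) (v j)).submatrix finSumFinEquiv finSumFinEquiv)
      = Matrix.fromBlocks
        (Matrix.of fun i j => gE p (u (Fin.castAdd m₂ i)) (v (Fin.castAdd m₂ j)))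
        (Matrix.of fun i j => gE p (u (Fin.castAdd m₂ i)) (v (Fin.natAdd m₁ j)))
        0
        (Matrix.of fun i j => gE p (u (Fin.natAdd m₁ i)) (v (Fin.natAdd m₁ j))) := by
    ext i j
    cases i with
    | inl i =>
      cases j with
      | inl j => simp [Matrix.fromBlocks]
      | inr j => simp [Matrix.fromBlocks]
    | inr i =>
      cases j with
      | inl j =>
        simp only [Matrix.submatrix_apply, finSumFinEquiv_apply_left, finSumFinEquiv_apply_right,
          Matrix.fromBlocks_apply₂₁, Matrix.of_apply, Matrix.zero_apply]
        exact gE_zero p (hz i j)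
      | inr j => simp [Matrix.fromBlocks]
  rw [this, Matrix.det_fromBlocks_zero₂₁]
  rfl

lemma hessP_eq_gE (p : ℕ → R) (n : ℕ) :
    hessP p n = Matrix.of fun i j : Fin n => gE p (i : ℕ) (j : ℕ) := rfl

lemma D2_val (p : ℕ → R) (m : ℕ) :
    D2 p (fun i : Fin m => (i : ℕ)) (fun j : Fin m => (j : ℕ)) = (hessP p m).det := rfl

lemma D2_consec (p : ℕ → R) (m c : ℕ) :
    D2 p (fun i : Fin m => c + (i : ℕ)) (fun j : Fin m => c + (j : ℕ)) = (hessP p m).det := by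
  rw [D2_shift, D2_val]

lemma D2_tri (p : ℕ → R) (c : ℕ) :
    D2 p (fun i : Fin c => (i : ℕ) + 1) (fun j : Fin c => (j : ℕ)) = (-1) ^ c := by
  unfold D2
  rw [Matrix.det_of_upperTriangular]
  · have : ∀ i : Fin c, gE p ((i : ℕ) + 1) (i : ℕ) = -1 := by
      intro i; unfold gE; rw [if_neg (by omega), if_pos rfl]
    simp only [Matrix.of_apply, this]
    simp
  · intro i j hij
    simp only [Matrix.of_apply]
    exact gE_zero p (by simp only [id] at hij; omega)


lemma succAbove_val {m : ℕ} (c : Fin (m + 1)) (j : Fin m) :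
    ((c.succAbove j) : ℕ) = if (j : ℕ) < (c : ℕ) then (j : ℕ) else (j : ℕ) + 1 := by
  rcases lt_or_ge ((j : ℕ)) ((c : ℕ)) with h | h
  · rw [if_pos h, Fin.succAbove, if_pos (by simpa [Fin.lt_def] using h)]
    rfl
  · rw [if_neg (not_lt.2 h), Fin.succAbove, if_neg (by simp [Fin.lt_def]; omega)]
    rfl

lemma det_hessP (p : ℕ → R) (a : ℕ → R) (ha1 : a 1 = 1)
    (harec : ∀ n ≥ 1, a (n + 1) = ∑ i ∈ Finset.Icc 1 n, p (n - i + 1) * a i) :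
    ∀ m, (hessP p m).det = a (m + 1) := by
  intro m
  induction m using Nat.strong_induction_on with
  | _ m ih =>
    match m, ih with
    | 0, _ => rw [Matrix.det_isEmpty, ha1]
    | m + 1, ih =>
      rw [Matrix.det_succ_row_zero]
      have hterm : ∀ c : Fin (m + 1),
          ((hessP p (m + 1)).submatrix Fin.succ c.succAbove).det
            = (-1) ^ (c : ℕ) * a (m - (c : ℕ) + 1) := by
        intro c
        have hc : (c : ℕ) + (m - (c : ℕ)) = m := by omega
        have hdet : ((hessP p (m + 1)).submatrix Fin.succ c.succAbove)
            = Matrix.of (fun i j : Fin m =>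
                gE p ((i : ℕ) + 1) ((c.succAbove j : Fin (m + 1)) : ℕ)) := rfl
        rw [hdet]
        show D2 p (fun i : Fin m => (i : ℕ) + 1)
            (fun j : Fin m => ((c.succAbove j : Fin (m + 1)) : ℕ)) = _
        rw [← D2_cast p hc]
        rw [D2_split p _ _ ?hz]
        case hz =>
          intro i j
          simp only [Function.comp_apply, Fin.coe_cast, Fin.coe_castAdd, Fin.coe_natAdd,
            succAbove_val]
          rw [if_pos (by omega)]
          omega
        have e1 : ((fun i : Fin m => (i : ℕ) + 1) ∘ Fin.cast hc) ∘ Fin.castAdd (m - (c : ℕ))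
            = fun i : Fin (c : ℕ) => (i : ℕ) + 1 := rfl
        have e2 : ((fun j : Fin m => ((c.succAbove j : Fin (m + 1)) : ℕ)) ∘ Fin.cast hc)
              ∘ Fin.castAdd (m - (c : ℕ)) = fun j : Fin (c : ℕ) => (j : ℕ) := by
          funext j
          simp only [Function.comp_apply, succAbove_val, Fin.coe_cast, Fin.coe_castAdd]
          rw [if_pos (by omega)]
        have e3 : ((fun i : Fin m => (i : ℕ) + 1) ∘ Fin.cast hc) ∘ Fin.natAdd (c : ℕ)
            = fun i : Fin (m - (c : ℕ)) => ((c : ℕ) + 1) + (i : ℕ) := by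
          funext i
          simp only [Function.comp_apply, Fin.coe_cast, Fin.coe_natAdd]
          omega
        have e4 : ((fun j : Fin m => ((c.succAbove j : Fin (m + 1)) : ℕ)) ∘ Fin.cast hc)
              ∘ Fin.natAdd (c : ℕ) = fun j : Fin (m - (c : ℕ)) => ((c : ℕ) + 1) + (j : ℕ) := by
          funext j
          simp only [Function.comp_apply, succAbove_val, Fin.coe_cast, Fin.coe_natAdd]
          rw [if_neg (by omega)]
          omega
        rw [e1, e2, e3, e4, D2_tri, D2_consec, ih (m - (c : ℕ)) (by omega)]
      have hent : ∀ c : Fin (m + 1), hessP p (m + 1) 0 c = p ((c : ℕ) + 1) := by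
        intro c
        show (if (0 : ℕ) ≤ (c : ℕ) then p ((c : ℕ) - 0 + 1)
          else if (0 : ℕ) = (c : ℕ) + 1 then -1 else 0) = _
        rw [if_pos (Nat.zero_le _)]
        norm_num
      calc ∑ c : Fin (m + 1), (-1) ^ (c : ℕ) * hessP p (m + 1) 0 c
              * ((hessP p (m + 1)).submatrix Fin.succ c.succAbove).det
          = ∑ c : Fin (m + 1), p ((c : ℕ) + 1) * a (m - (c : ℕ) + 1) := by
            refine Finset.sum_congr rfl fun c _ => ?_
            rw [hterm c, hent c]
            have hh : (-1 : R) ^ (c : ℕ) * (-1 : R) ^ (c : ℕ) = 1 := by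
              rw [← pow_add]
              exact Even.neg_one_pow ⟨(c : ℕ), rfl⟩
            calc (-1 : R) ^ (c : ℕ) * p ((c : ℕ) + 1) * ((-1) ^ (c : ℕ) * a (m - (c : ℕ) + 1))
                = ((-1 : R) ^ (c : ℕ) * (-1) ^ (c : ℕ))
                    * (p ((c : ℕ) + 1) * a (m - (c : ℕ) + 1)) := by ring
              _ = _ := by rw [hh, one_mul]
        _ = ∑ c ∈ Finset.range (m + 1), p (c + 1) * a (m - c + 1) :=
            Fin.sum_univ_eq_sum_range (fun c => p (c + 1) * a (m - c + 1)) (m + 1)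
        _ = ∑ c ∈ Finset.range (m + 1), p (m - c + 1) * a (c + 1) := by
            rw [← Finset.sum_range_reflect]
            refine Finset.sum_congr rfl fun c hc => ?_
            rw [Finset.mem_range] at hc
            have h1 : m + 1 - 1 - c = m - c := by omega
            have h2 : m - (m - c) = c := by omega
            rw [h1, h2]
        _ = a (m + 1 + 1) := by
            rw [harec (m + 1) (by omega)]
            refine Finset.sum_nbij' (fun c => c + 1) (fun i => i - 1) ?_ ?_ ?_ ?_ ?_
            · intro c hc; rw [Finset.mem_range] at hc; rw [Finset.mem_Icc]; omega
            · intro i hi; rw [Finset.mem_Icc] at hi; rw [Finset.mem_range]; omega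
            · intro c _; omega
            · intro i hi; rw [Finset.mem_Icc] at hi; omega
            · intro c hc
              rw [Finset.mem_range] at hc
              have h5 : m + 1 - (c + 1) + 1 = m - c + 1 := by omega
              rw [h5]

end HessAux

section ChunkC

namespace HessAux

variable {R : Type*} [CommRing R]

/-- determinant of the principal submatrix of `hessP p n` on `s` -/
def pmDet (p : ℕ → R) {n : ℕ} (s : Finset (Fin n)) : R :=
  ((hessP p n).submatrix (fun i : s => (i : Fin n)) (fun j : s => (j : Fin n))).det

lemma pmDet_eq_D2 (p : ℕ → R) {n m : ℕ} (s : Finset (Fin n)) (h : s.card = m) :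
    pmDet p s = D2 p (fun t : Fin m => ((s.orderEmbOfFin h t : Fin n) : ℕ))
      (fun t : Fin m => ((s.orderEmbOfFin h t : Fin n) : ℕ)) := by
  unfold pmDet D2
  rw [← Matrix.det_submatrix_equiv_self (s.orderIsoOfFin h).toEquiv
      ((hessP p n).submatrix (fun i : s => (i : Fin n)) (fun j : s => (j : Fin n)))]
  rfl

lemma pmDet_univ (p : ℕ → R) (n : ℕ) :
    pmDet p (Finset.univ : Finset (Fin n)) = (hessP p n).det :=
  Matrix.det_submatrix_equiv_self (Equiv.subtypeUnivEquiv (fun x => Finset.mem_univ x)) _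

/-- the minimum of the complement of `s` -/
def mind {n₀ : ℕ} (s : Finset (Fin n₀)) : ℕ := WithTop.untopD 0 ((sᶜ.image Fin.val).min)

lemma mind_spec {n₀ : ℕ} {s : Finset (Fin n₀)} (h : sᶜ.Nonempty) :
    (mind s ∈ (sᶜ.image Fin.val)) ∧ ∀ y ∈ sᶜ.image Fin.val, mind s ≤ y := by
  have hne : (sᶜ.image Fin.val).Nonempty := h.image _
  have hm : mind s = (sᶜ.image Fin.val).min' hne := by
    unfold mind
    rw [← Finset.coe_min' hne]
    rfl
  rw [hm]
  exact ⟨Finset.min'_mem _ _, fun y hy => Finset.min'_le _ y hy⟩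

lemma mind_eq {n₀ : ℕ} (s : Finset (Fin n₀)) (d : ℕ)
    (h1 : ∃ i : Fin n₀, i ∉ s ∧ (i : ℕ) = d)
    (h2 : ∀ i : Fin n₀, i ∉ s → d ≤ (i : ℕ)) : mind s = d := by
  obtain ⟨i0, hi0, hi0v⟩ := h1
  have hne : sᶜ.Nonempty := ⟨i0, Finset.mem_compl.2 hi0⟩
  obtain ⟨hmem, hmin⟩ := mind_spec hne
  simp only [Finset.mem_image, Finset.mem_compl] at hmem
  obtain ⟨i, hi, hiv⟩ := hmem
  have hle := h2 i hi
  have hge := hmin d (Finset.mem_image.2 ⟨i0, Finset.mem_compl.2 hi0, hi0v⟩)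
  omega

lemma mind_notmem {n₀ : ℕ} {s : Finset (Fin n₀)} (h : sᶜ.Nonempty) :
    ∀ i : Fin n₀, (i : ℕ) = mind s → i ∉ s := by
  intro i hiv
  obtain ⟨hmem, _⟩ := mind_spec h
  simp only [Finset.mem_image, Finset.mem_compl] at hmem
  obtain ⟨i', hi', hi'v⟩ := hmem
  have : i = i' := Fin.ext (by omega)
  rw [this]; exact hi'

lemma mind_low {n₀ : ℕ} {s : Finset (Fin n₀)} (h : sᶜ.Nonempty) :
    ∀ i : Fin n₀, (i : ℕ) < mind s → i ∈ s := by
  intro i hiv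
  by_contra hi
  obtain ⟨_, hmin⟩ := mind_spec h
  have := hmin (i : ℕ) (Finset.mem_image.2 ⟨i, Finset.mem_compl.2 hi, rfl⟩)
  omega

lemma mind_lt {n₀ : ℕ} {s : Finset (Fin n₀)} (h : sᶜ.Nonempty) : mind s < n₀ := by
  obtain ⟨hmem, _⟩ := mind_spec h
  simp only [Finset.mem_image, Finset.mem_compl] at hmem
  obtain ⟨i, _, hiv⟩ := hmem
  omega

lemma card_filter_lt (n₀ d : ℕ) (h : d ≤ n₀) :
    (Finset.univ.filter (fun i : Fin n₀ => (i : ℕ) < d)).card = d := by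
  have heq : Finset.univ.filter (fun i : Fin n₀ => (i : ℕ) < d)
      = (Finset.range d).attachFin
        (fun x hx => by rw [Finset.mem_range] at hx; omega) := by
    ext i
    simp [Finset.mem_attachFin, Finset.mem_range]
  rw [heq, Finset.card_attachFin, Finset.card_range]

/-- insert `d` low elements and shift `t` up by `d+1` -/
def insF {n₀ n₁ : ℕ} (d : ℕ) (t : Finset (Fin n₁)) : Finset (Fin n₀) :=
  Finset.univ.filter (fun i => (i : ℕ) < d ∨ ∃ x ∈ t, (i : ℕ) = d + 1 + (x : ℕ))

def extF {n₀ n₁ : ℕ} (d : ℕ) (s : Finset (Fin n₀)) : Finset (Fin n₁) :=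
  Finset.univ.filter (fun x => ∃ i ∈ s, (i : ℕ) = d + 1 + (x : ℕ))

lemma mem_insF {n₀ n₁ d : ℕ} {t : Finset (Fin n₁)} {i : Fin n₀} :
    i ∈ (insF d t : Finset (Fin n₀)) ↔
      (i : ℕ) < d ∨ ∃ x ∈ t, (i : ℕ) = d + 1 + (x : ℕ) := by
  simp [insF]

lemma mem_extF {n₀ n₁ d : ℕ} {s : Finset (Fin n₀)} {x : Fin n₁} :
    x ∈ (extF d s : Finset (Fin n₁)) ↔ ∃ i ∈ s, (i : ℕ) = d + 1 + (x : ℕ) := by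
  simp [extF]

lemma card_insF {n₀ n₁ d : ℕ} (hb : n₀ = d + 1 + n₁) (t : Finset (Fin n₁)) :
    (insF d t : Finset (Fin n₀)).card = d + t.card := by
  have hsplit : (insF d t : Finset (Fin n₀))
      = Finset.univ.filter (fun i : Fin n₀ => (i : ℕ) < d)
        ∪ Finset.univ.filter (fun i : Fin n₀ => ∃ x ∈ t, (i : ℕ) = d + 1 + (x : ℕ)) := by
    unfold insF
    rw [Finset.filter_or]
  have hdisj : Disjoint (Finset.univ.filter (fun i : Fin n₀ => (i : ℕ) < d))
      (Finset.univ.filter (fun i : Fin n₀ => ∃ x ∈ t, (i : ℕ) = d + 1 + (x : ℕ))) := by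
    rw [Finset.disjoint_left]
    intro i hi1 hi2
    rw [Finset.mem_filter] at hi1 hi2
    obtain ⟨x, _, hx⟩ := hi2.2
    omega
  have himg : Finset.univ.filter (fun i : Fin n₀ => ∃ x ∈ t, (i : ℕ) = d + 1 + (x : ℕ))
      = t.image (fun x : Fin n₁ =>
          (⟨d + 1 + (x : ℕ), by have := x.isLt; omega⟩ : Fin n₀)) := by
    ext i
    simp only [Finset.mem_filter, Finset.mem_univ, true_and, Finset.mem_image]
    constructor
    · rintro ⟨x, hx, hxe⟩
      exact ⟨x, hx, Fin.ext (show d + 1 + (x : ℕ) = (i : ℕ) by omega)⟩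
    · rintro ⟨x, hx, hxe⟩
      exact ⟨x, hx, by subst hxe; rfl⟩
  have hinj : Function.Injective (fun x : Fin n₁ =>
      (⟨d + 1 + (x : ℕ), by have := x.isLt; omega⟩ : Fin n₀)) := by
    intro x y hxy
    have hv : d + 1 + (x : ℕ) = d + 1 + (y : ℕ) := congrArg Fin.val hxy
    exact Fin.ext (by omega)
  rw [hsplit, Finset.card_union_of_disjoint hdisj, card_filter_lt n₀ d (by omega), himg,
    Finset.card_image_of_injective t hinj]

lemma mind_insF {n₀ n₁ d : ℕ} (hb : n₀ = d + 1 + n₁) (t : Finset (Fin n₁)) :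
    mind (insF d t : Finset (Fin n₀)) = d := by
  apply mind_eq
  · refine ⟨⟨d, by omega⟩, ?_, rfl⟩
    rw [mem_insF]
    rintro (h | ⟨x, -, hx⟩)
    · exact Nat.lt_irrefl d h
    · have hx' : d = d + 1 + (x : ℕ) := hx
      omega
  · intro i hi
    rw [mem_insF] at hi
    push_neg at hi
    omega

lemma extF_insF {n₀ n₁ d : ℕ} (hb : n₀ = d + 1 + n₁) (t : Finset (Fin n₁)) :
    extF d (insF d t : Finset (Fin n₀)) = t := by
  ext x
  rw [mem_extF]
  constructor
  · rintro ⟨i, hi, hie⟩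
    rw [mem_insF] at hi
    rcases hi with h | ⟨x', hx', hx'e⟩
    · omega
    · have : x = x' := Fin.ext (by omega)
      rw [this]; exact hx'
  · intro hx
    exact ⟨⟨d + 1 + (x : ℕ), by omega⟩, mem_insF.2 (Or.inr ⟨x, hx, rfl⟩), rfl⟩

lemma insF_extF {n₀ n₁ : ℕ} (s : Finset (Fin n₀)) (hne : sᶜ.Nonempty)
    (hb : n₀ = mind s + 1 + n₁) :
    (insF (mind s) (extF (mind s) s : Finset (Fin n₁)) : Finset (Fin n₀)) = s := by
  ext i
  rw [mem_insF]
  constructor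
  · rintro (h | ⟨x, hx, hxe⟩)
    · exact mind_low hne i h
    · rw [mem_extF] at hx
      obtain ⟨i', hi', hi'e⟩ := hx
      have : i = i' := Fin.ext (by omega)
      rw [this]; exact hi'
  · intro hi
    rcases lt_trichotomy ((i : ℕ)) (mind s) with h | h | h
    · exact Or.inl h
    · exact absurd hi (mind_notmem hne i h)
    · have hlt : (i : ℕ) - (mind s) - 1 < n₁ := by have := i.isLt; omega
      refine Or.inr ⟨⟨(i : ℕ) - (mind s) - 1, hlt⟩, ?_,
        show (i : ℕ) = mind s + 1 + ((i : ℕ) - mind s - 1) by omega⟩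
      rw [mem_extF]
      exact ⟨i, hi, show (i : ℕ) = mind s + 1 + ((i : ℕ) - mind s - 1) by omega⟩

lemma card_extF {n₀ n₁ : ℕ} (s : Finset (Fin n₀)) (hne : sᶜ.Nonempty)
    (hb : n₀ = mind s + 1 + n₁) :
    (extF (mind s) s : Finset (Fin n₁)).card = s.card - mind s := by
  have h1 := card_insF hb (extF (mind s) s : Finset (Fin n₁))
  rw [insF_extF s hne hb] at h1
  omega

lemma mind_le_card {n₀ : ℕ} (s : Finset (Fin n₀)) (hne : sᶜ.Nonempty) :
    mind s ≤ s.card := by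
  have hsub : Finset.univ.filter (fun i : Fin n₀ => (i : ℕ) < mind s) ⊆ s := by
    intro i hi
    rw [Finset.mem_filter] at hi
    exact mind_low hne i hi.2
  have := Finset.card_le_card hsub
  rwa [card_filter_lt n₀ (mind s) (le_of_lt (mind_lt hne))] at this

end HessAux

end ChunkC
section ChunkD

namespace HessAux

variable {R : Type*} [CommRing R]

lemma pmDet_insF (p a : ℕ → R) (ha1 : a 1 = 1)
    (harec : ∀ n ≥ 1, a (n + 1) = ∑ i ∈ Finset.Icc 1 n, p (n - i + 1) * a i)
    {m k d : ℕ} (hd : d ≤ m)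
    (t : Finset (Fin (m - d + k))) (ht : t.card = m - d) :
    pmDet p (insF d t : Finset (Fin (m + k + 1))) = a (d + 1) * pmDet p t := by
  have hb : m + k + 1 = d + 1 + (m - d + k) := by omega
  have hcard : (insF d t : Finset (Fin (m + k + 1))).card = m := by
    rw [card_insF hb t, ht]; omega
  have hm : m = d + (m - d) := by omega
  set w : Fin (m - d) → ℕ := fun x => ((t.orderEmbOfFin ht x : Fin (m - d + k)) : ℕ) with hw
  have hwlt : ∀ x, w x < m - d + k := fun x => (t.orderEmbOfFin ht x).isLt
  have hwmono : StrictMono w := fun x y hxy => (t.orderEmbOfFin ht).strictMono hxy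
  set u0 : Fin (d + (m - d)) → Fin (m + k + 1) :=
    Fin.addCases (fun i : Fin d => ⟨(i : ℕ), by have := i.isLt; omega⟩)
      (fun x : Fin (m - d) => ⟨d + 1 + w x, by have := hwlt x; omega⟩) with hu0
  have hleft : ∀ i : Fin d, (u0 (Fin.castAdd (m - d) i) : ℕ) = (i : ℕ) := by
    intro i
    exact congrArg Fin.val (Fin.addCases_left (motive := fun _ => Fin (m + k + 1)) i)
  have hright : ∀ x : Fin (m - d), (u0 (Fin.natAdd d x) : ℕ) = d + 1 + w x := by
    intro x
    exact congrArg Fin.val (Fin.addCases_right (motive := fun _ => Fin (m + k + 1)) x)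
  have hval : ∀ z : Fin (d + (m - d)),
      ((z : ℕ) < d ∧ (u0 z : ℕ) = (z : ℕ)) ∨
      (∃ x : Fin (m - d), (z : ℕ) = d + (x : ℕ) ∧ (u0 z : ℕ) = d + 1 + w x) := by
    intro z
    rcases lt_or_ge ((z : ℕ)) d with h | h
    · left
      refine ⟨h, ?_⟩
      have hz : z = Fin.castAdd (m - d) ⟨(z : ℕ), h⟩ := Fin.ext rfl
      conv_lhs => rw [hz]
      exact hleft _
    · right
      have hzb : (z : ℕ) - d < m - d := by have := z.isLt; omega
      refine ⟨⟨(z : ℕ) - d, hzb⟩, by show (z : ℕ) = d + ((z : ℕ) - d); omega, ?_⟩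
      have hz : z = Fin.natAdd d ⟨(z : ℕ) - d, hzb⟩ :=
        Fin.ext (show (z : ℕ) = d + ((z : ℕ) - d) by omega)
      conv_lhs => rw [hz]
      exact hright _
  have hmono : StrictMono u0 := by
    intro z1 z2 hlt
    rw [Fin.lt_def] at hlt ⊢
    rcases hval z1 with ⟨h1, e1⟩ | ⟨x1, hx1, e1⟩ <;>
      rcases hval z2 with ⟨h2, e2⟩ | ⟨x2, hx2, e2⟩
    · omega
    · rw [e1, e2]; omega
    · exfalso; omega
    · rw [e1, e2]
      have hx12 : x1 < x2 := by rw [Fin.lt_def]; omega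
      have := hwmono hx12
      omega
  have hmono' : StrictMono (fun x : Fin m => u0 (Fin.cast hm x)) := by
    intro x y hxy
    exact hmono (show Fin.cast hm x < Fin.cast hm y from hxy)
  have hfs : ∀ x : Fin m, u0 (Fin.cast hm x) ∈ (insF d t : Finset (Fin (m + k + 1))) := by
    intro x
    rw [mem_insF]
    rcases hval (Fin.cast hm x) with ⟨h1, e1⟩ | ⟨x', hx', e'⟩
    · left; omega
    · right
      refine ⟨t.orderEmbOfFin ht x', Finset.orderEmbOfFin_mem t ht x', ?_⟩
      rw [hw] at e'
      exact e'
  have huniq : (fun x : Fin m => u0 (Fin.cast hm x))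
      = ⇑((insF d t : Finset (Fin (m + k + 1))).orderEmbOfFin hcard) :=
    Finset.orderEmbOfFin_unique hcard hfs hmono'
  rw [pmDet_eq_D2 p _ hcard, pmDet_eq_D2 p t ht]
  have hvu : (fun t' : Fin m =>
        ((((insF d t : Finset (Fin (m + k + 1))).orderEmbOfFin hcard) t' : Fin (m + k + 1)) : ℕ))
      = ((fun z => (u0 z : ℕ)) ∘ Fin.cast hm) := by
    rw [← huniq]
    rfl
  rw [hvu, D2_cast p hm]
  rw [D2_split p _ _ (by
    intro i j
    have h1 := hleft j
    have h2 := hright i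
    have h3 := j.isLt
    omega)]
  have e1 : ((fun z => (u0 z : ℕ)) ∘ Fin.castAdd (m - d)) = fun i : Fin d => (i : ℕ) := by
    funext i; exact hleft i
  have e2 : ((fun z => (u0 z : ℕ)) ∘ Fin.natAdd d) = fun x : Fin (m - d) => (d + 1) + w x := by
    funext x; exact hright x
  rw [e1, e2, D2_val, det_hessP p a ha1 harec d, D2_shift p (d + 1) w w]

lemma main_aux (p a : ℕ → R) (ha1 : a 1 = 1)
    (harec : ∀ n ≥ 1, a (n + 1) = ∑ i ∈ Finset.Icc 1 n, p (n - i + 1) * a i) :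
    ∀ (k m : ℕ),
      (∑ s ∈ Finset.powersetCard m (Finset.univ : Finset (Fin (m + k))), pmDet p s)
        = ∑ j ∈ Finset.Nat.antidiagonalTuple (k + 1) m, ∏ t, a (j t + 1) := by
  intro k
  induction k with
  | zero =>
    intro m
    have hcard : (Finset.univ : Finset (Fin (m + 0))).card = m := by simp
    have h1 : Finset.powersetCard m (Finset.univ : Finset (Fin (m + 0)))
        = {(Finset.univ : Finset (Fin (m + 0)))} := by
      have h2 := Finset.powersetCard_self (Finset.univ : Finset (Fin (m + 0)))
      rw [hcard] at h2
      exact h2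
    rw [h1, Finset.sum_singleton, pmDet_univ, det_hessP p a ha1 harec,
      Finset.Nat.antidiagonalTuple_one, Finset.sum_singleton]
    simp
  | succ k IH =>
    intro m
    -- facts about subsets of size m
    have hfacts : ∀ s ∈ Finset.powersetCard m (Finset.univ : Finset (Fin (m + (k + 1)))),
        s.card = m ∧ sᶜ.Nonempty ∧ mind s ≤ m := by
      intro s hs
      have hsc : s.card = m := Finset.mem_powersetCard_univ.1 hs
      have hcc : sᶜ.card = k + 1 := by
        rw [Finset.card_compl, hsc]
        simp only [Fintype.card_fin]
        omega
      have hne : sᶜ.Nonempty := Finset.card_pos.1 (by omega)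
      exact ⟨hsc, hne, le_trans (mind_le_card s hne) (le_of_eq hsc)⟩
    have hL : (∑ s ∈ Finset.powersetCard m (Finset.univ : Finset (Fin (m + (k + 1)))),
          pmDet p s)
        = ∑ x ∈ (Finset.range (m + 1)).sigma
            (fun d => Finset.powersetCard (m - d)
              (Finset.univ : Finset (Fin (m - d + k)))),
            a (x.1 + 1) * pmDet p x.2 := by
      refine Finset.sum_nbij' (fun s => ⟨mind s, extF (mind s) s⟩)
        (fun x => insF x.1 x.2) ?_ ?_ ?_ ?_ ?_
      · intro s hs
        obtain ⟨hsc, hne, hdm⟩ := hfacts s hs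
        have hb : m + (k + 1) = mind s + 1 + (m - mind s + k) := by omega
        rw [Finset.mem_sigma]
        constructor
        · exact Finset.mem_range.2 (show mind s < m + 1 by omega)
        · exact Finset.mem_powersetCard_univ.2 (by rw [card_extF s hne hb, hsc])
      · rintro ⟨d, t⟩ hx
        rw [Finset.mem_sigma] at hx
        have hd : d < m + 1 := Finset.mem_range.1 hx.1
        have ht : t.card = m - d := Finset.mem_powersetCard_univ.1 hx.2
        have hb : m + (k + 1) = d + 1 + (m - d + k) := by omega
        exact Finset.mem_powersetCard_univ.2 (by rw [card_insF hb t, ht]; omega)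
      · intro s hs
        obtain ⟨hsc, hne, hdm⟩ := hfacts s hs
        have hb : m + (k + 1) = mind s + 1 + (m - mind s + k) := by omega
        exact insF_extF s hne hb
      · rintro ⟨d, t⟩ hx
        rw [Finset.mem_sigma] at hx
        have hd : d < m + 1 := Finset.mem_range.1 hx.1
        have ht : t.card = m - d := Finset.mem_powersetCard_univ.1 hx.2
        have hb : m + (k + 1) = d + 1 + (m - d + k) := by omega
        have h1 : mind (insF d t : Finset (Fin (m + (k + 1)))) = d := mind_insF hb t
        have h2 : extF d (insF d t : Finset (Fin (m + (k + 1)))) = t := extF_insF hb t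
        have h2' : ∀ (e : ℕ) (_ : e = d),
            HEq (extF e (insF d t : Finset (Fin (m + (k + 1)))) : Finset (Fin (m - e + k))) t :=
          fun e he => by subst he; exact heq_of_eq h2
        exact Sigma.ext h1 (h2' _ h1)
      · intro s hs
        obtain ⟨hsc, hne, hdm⟩ := hfacts s hs
        have hb : m + (k + 1) = mind s + 1 + (m - mind s + k) := by omega
        have hcE : (extF (mind s) s : Finset (Fin (m - mind s + k))).card = m - mind s := by
          rw [card_extF s hne hb, hsc]
        calc pmDet p s
            = pmDet p (insF (mind s) (extF (mind s) s) : Finset (Fin (m + (k + 1)))) := by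
              rw [insF_extF s hne hb]
          _ = a (mind s + 1) * pmDet p (extF (mind s) s : Finset (Fin (m - mind s + k))) :=
              pmDet_insF p a ha1 harec hdm _ hcE
    rw [hL, Finset.sum_sigma]
    have hR : (∑ j ∈ Finset.Nat.antidiagonalTuple (k + 1 + 1) m, ∏ t, a (j t + 1))
        = ∑ x ∈ (Finset.HasAntidiagonal.antidiagonal m).sigma
            (fun de => Finset.Nat.antidiagonalTuple (k + 1) de.2),
            a (x.1.1 + 1) * ∏ t, a (x.2 t + 1) := by
      refine Finset.sum_nbij'
        (fun j : Fin (k + 1 + 1) → ℕ =>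
          (⟨(j 0, ∑ t : Fin (k + 1), j t.succ), Fin.tail j⟩ :
            (_ : ℕ × ℕ) × (Fin (k + 1) → ℕ)))
        (fun x : (_ : ℕ × ℕ) × (Fin (k + 1) → ℕ) => Fin.cons x.1.1 x.2) ?_ ?_ ?_ ?_ ?_
      · intro j hj
        rw [Finset.Nat.mem_antidiagonalTuple] at hj
        rw [Finset.mem_sigma]
        constructor
        · exact Finset.HasAntidiagonal.mem_antidiagonal.2 ((Fin.sum_univ_succ j).symm.trans hj)
        · exact Finset.Nat.mem_antidiagonalTuple.2 rfl
      · rintro ⟨⟨d, e⟩, j⟩ hx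
        rw [Finset.mem_sigma] at hx
        have hde : d + e = m := by
          have := Finset.HasAntidiagonal.mem_antidiagonal.1 hx.1
          exact this
        have hj : (∑ t, j t) = e := Finset.Nat.mem_antidiagonalTuple.1 hx.2
        refine Finset.Nat.mem_antidiagonalTuple.2 ?_
        rw [Fin.sum_cons, hj]
        exact hde
      · intro j _
        exact Fin.cons_self_tail j
      · rintro ⟨⟨d, e⟩, j⟩ hx
        rw [Finset.mem_sigma] at hx
        have hj : (∑ t, j t) = e := Finset.Nat.mem_antidiagonalTuple.1 hx.2
        have h2 : (∑ t : Fin (k + 1), (Fin.cons d j : Fin (k + 1 + 1) → ℕ) t.succ) = e := by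
          simp only [Fin.cons_succ]
          exact hj
        simp only [Fin.cons_zero, Fin.tail_cons, h2]
      · intro j _
        exact (Fin.prod_univ_succ fun t => a (j t + 1)).trans rfl
    rw [hR, Finset.sum_sigma, Finset.Nat.sum_antidiagonal_eq_sum_range_succ_mk]
    refine Finset.sum_congr rfl fun d hd => ?_
    rw [Finset.mem_range] at hd
    show (∑ t ∈ Finset.powersetCard (m - d) Finset.univ, a (d + 1) * pmDet p t)
        = ∑ j ∈ Finset.Nat.antidiagonalTuple (k + 1) (m - d),
            a (d + 1) * ∏ t, a (j t + 1)
    rw [← Finset.mul_sum, ← Finset.mul_sum, IH (m - d)]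

end HessAux

end ChunkD

theorem sum_principal_minors_hessP {R : Type*} [CommRing R] (p : ℕ → R) (a : ℕ → R)
    (ha1 : a 1 = 1)
    (harec : ∀ n ≥ 1, a (n + 1) = ∑ i ∈ Finset.Icc 1 n, p (n - i + 1) * a i)
    (n k : ℕ) (hk : k ≤ n) :
    ∑ s ∈ Finset.powersetCard (n - k) (Finset.univ : Finset (Fin n)),
        ((hessP p n).submatrix (fun i : s => (i : Fin n)) (fun j : s => (j : Fin n))).det
      = ∑ j ∈ Finset.Nat.antidiagonalTuple (k + 1) (n - k), ∏ t, a (j t + 1) := by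
  obtain ⟨m, rfl⟩ : ∃ m, n = m + k := ⟨n - k, by omega⟩
  have hmk : m + k - k = m := by omega
  rw [hmk]
  exact HessAux.main_aux p a ha1 harec k m
end

section
/- For nonnegative integers n and k with n ≥ k, the convolved Fibonacci identity holds: Σ_{j_1 + j_2 + ... + j_{k+1} = n-k, j_t ≥ 0} F_{j_1+1} F_{j_2+1} ... F_{j_{k+1}+1} = Σ_{i=0}^{⌊(n-k)/2⌋} C(n-i, i) · C(n-2i, k), where F_1 = F_2 = 1 are Fibonacci numbers. -/
open PowerSeries Finset

noncomputable def Fps : PowerSeries ℕ := PowerSeries.mk fun d => Nat.fib (d + 1)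

lemma Fps_eq : Fps = 1 + (PowerSeries.X + PowerSeries.X ^ 2) * Fps := by
  ext d
  rw [add_mul, map_add, map_add]
  match d with
  | 0 => simp [Fps]
  | 1 =>
    rw [pow_two, mul_assoc, coeff_succ_X_mul, coeff_succ_X_mul]
    simp [Fps]
  | (e+2) =>
    rw [pow_two, mul_assoc]
    rw [show e + 2 = (e + 1) + 1 from rfl, coeff_succ_X_mul, coeff_succ_X_mul, coeff_succ_X_mul]
    simp only [Fps, coeff_mk, coeff_one, if_neg (Nat.succ_ne_zero (e+1))]
    rw [show e + 1 + 1 + 1 = (e + 1) + 2 from rfl, Nat.fib_add_two]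
    omega

lemma Fps_pow_eq (c : ℕ) : Fps ^ (c + 2) = Fps ^ (c + 1)
    + (PowerSeries.X + PowerSeries.X ^ 2) * Fps ^ (c + 2) := by
  calc Fps ^ (c + 2) = Fps * Fps ^ (c + 1) := by ring
    _ = (1 + (PowerSeries.X + PowerSeries.X ^ 2) * Fps) * Fps ^ (c + 1) := by rw [← Fps_eq]
    _ = _ := by ring

lemma bridge (c m : ℕ) :
    ∑ j ∈ Finset.Nat.antidiagonalTuple c m, ∏ t, Nat.fib (j t + 1)
      = coeff m (Fps ^ c) := by
  have h : Fps ^ c = ∏ _t : Fin c, Fps := by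
    rw [prod_const, card_univ, Fintype.card_fin]
  rw [h, coeff_prod]
  refine Finset.sum_nbij' (fun j => Finsupp.equivFunOnFinite.symm j) (fun l => ⇑l)
    ?_ ?_ ?_ ?_ ?_
  · intro a ha
    rw [Finset.Nat.mem_antidiagonalTuple] at ha
    simp [Finset.mem_finsuppAntidiag, ha]
  · intro l hl
    rw [Finset.mem_finsuppAntidiag] at hl
    rw [Finset.Nat.mem_antidiagonalTuple, ← hl.1]
  · intro a _; ext t; simp
  · intro l _; ext t; simp
  · intro a _
    apply Finset.prod_congr rfl
    intro t _
    simp [Fps]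

lemma fib_sum (d : ℕ) :
    Nat.fib (d + 1) = ∑ i ∈ range (d / 2 + 1), (d - i).choose i := by
  rw [Nat.fib_succ_eq_sum_choose, ← Finset.Nat.sum_antidiagonal_swap]
  rw [show (∑ p ∈ Finset.HasAntidiagonal.antidiagonal d, (p.swap.1).choose p.swap.2)
        = ∑ p ∈ Finset.HasAntidiagonal.antidiagonal d, (p.2).choose p.1 from rfl]
  rw [Finset.Nat.sum_antidiagonal_eq_sum_range_succ (fun x y => Nat.choose y x)]
  symm
  apply Finset.sum_subset
  · intro x hx
    rw [Finset.mem_range] at *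
    omega
  · intro x hx hx2
    rw [Finset.mem_range] at *
    exact Nat.choose_eq_zero_of_lt (by omega)

lemma Trec (c e : ℕ) :
    ∑ i ∈ range ((e + 2) / 2 + 1), (e + 2 + (c + 1) - i).choose (c + 1) * (e + 2 - i).choose i
    = ∑ i ∈ range ((e + 2) / 2 + 1), (e + 2 + c - i).choose c * (e + 2 - i).choose i
    + ∑ i ∈ range ((e + 1) / 2 + 1), (e + 1 + (c + 1) - i).choose (c + 1) * (e + 1 - i).choose i
    + ∑ i ∈ range (e / 2 + 1), (e + (c + 1) - i).choose (c + 1) * (e - i).choose i := by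
  have stepA : ∀ i ∈ range ((e + 2) / 2 + 1),
      (e + 2 + (c + 1) - i).choose (c + 1) * (e + 2 - i).choose i
      = (e + 2 + c - i).choose c * (e + 2 - i).choose i
      + (e + 2 + c - i).choose (c + 1) * (e + 2 - i).choose i := by
    intro i hi
    rw [mem_range] at hi
    rw [show e + 2 + (c + 1) - i = (e + 2 + c - i) + 1 from by omega,
      Nat.choose_succ_succ', add_mul]
  have key2 : ∑ i ∈ range ((e + 2) / 2 + 1), (e + 2 + c - i).choose (c + 1) * (e + 2 - i).choose i
      = ∑ i ∈ range ((e + 1) / 2 + 1), (e + 1 + (c + 1) - i).choose (c + 1) * (e + 1 - i).choose i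
      + ∑ i ∈ range (e / 2 + 1), (e + (c + 1) - i).choose (c + 1) * (e - i).choose i := by
    have hb : (e + 2) / 2 = e / 2 + 1 := by omega
    rw [hb, Finset.sum_range_succ']
    have stepB : ∀ i ∈ range (e / 2 + 1),
        (e + 2 + c - (i + 1)).choose (c + 1) * (e + 2 - (i + 1)).choose (i + 1)
        = (e + (c + 1) - i).choose (c + 1) * (e - i).choose i
        + (e + 1 + c - i).choose (c + 1) * (e - i).choose (i + 1) := by
      intro i hi
      rw [mem_range] at hi
      rw [show e + 2 + c - (i + 1) = e + 1 + c - i from by omega,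
        show e + 2 - (i + 1) = (e - i) + 1 from by omega,
        Nat.choose_succ_succ', mul_add,
        show e + (c + 1) - i = e + 1 + c - i from by omega]
    rw [Finset.sum_congr rfl stepB, Finset.sum_add_distrib]
    have hrhs : ∑ i ∈ range ((e + 1) / 2 + 1),
        (e + 1 + (c + 1) - i).choose (c + 1) * (e + 1 - i).choose i
        = ∑ i ∈ range ((e + 1) / 2), (e + 1 + c - i).choose (c + 1) * (e - i).choose (i + 1)
          + (e + 2 + c).choose (c + 1) := by
      rw [Finset.sum_range_succ']
      congr 1
      · apply Finset.sum_congr rfl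
        intro i hi
        rw [mem_range] at hi
        rw [show e + 1 + (c + 1) - (i + 1) = e + 1 + c - i from by omega,
          show e + 1 - (i + 1) = e - i from by omega]
      · simp [show e + 1 + (c + 1) - 0 = e + 2 + c from by omega]
    rw [hrhs]
    have hext : ∑ i ∈ range (e / 2 + 1), (e + 1 + c - i).choose (c + 1) * (e - i).choose (i + 1)
        = ∑ i ∈ range ((e + 1) / 2), (e + 1 + c - i).choose (c + 1) * (e - i).choose (i + 1) := by
      rcases Nat.even_or_odd e with he | he
      · obtain ⟨t, rfl⟩ := he
        rw [show (t + t) / 2 = t from by omega, show (t + t + 1) / 2 = t from by omega,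
          Finset.sum_range_succ, show (t + t - t).choose (t + 1) = 0 from Nat.choose_eq_zero_of_lt (by omega), mul_zero, add_zero]
      · obtain ⟨t, rfl⟩ := he
        rw [show (2 * t + 1) / 2 = t from by omega, show (2 * t + 1 + 1) / 2 = t + 1 from by omega]
    rw [hext]
    have h0 : (e + 2 + c - 0).choose (c + 1) * (e + 2 - 0).choose 0
        = (e + 2 + c).choose (c + 1) := by simp
    rw [h0]
    ring
  rw [Finset.sum_congr rfl stepA, Finset.sum_add_distrib, key2]
  ring

lemma main_formula (c : ℕ) : ∀ d, coeff d (Fps ^ (c + 1))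
    = ∑ i ∈ range (d / 2 + 1), (d + c - i).choose c * (d - i).choose i := by
  induction c with
  | zero =>
    intro d
    rw [pow_one]
    simp only [Fps, coeff_mk]
    rw [fib_sum]
    apply Finset.sum_congr rfl
    intro i hi
    rw [Nat.choose_zero_right, one_mul]
  | succ c ih =>
    intro d
    induction d using Nat.strong_induction_on with
    | _ d ihd =>
      match d with
      | 0 =>
        rw [coeff_zero_eq_constantCoeff_apply, map_pow]
        simp [Fps, constantCoeff_mk]
      | 1 =>
        conv_lhs => rw [Fps_pow_eq]
        rw [map_add, add_mul, map_add, pow_two, mul_assoc]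
        rw [show coeff 1 (PowerSeries.X * Fps ^ (c + 2))
            = coeff 0 (Fps ^ (c + 2)) from coeff_succ_X_mul 0 _,
          show coeff 1 (PowerSeries.X * (PowerSeries.X * Fps ^ (c + 2)))
            = coeff 0 (PowerSeries.X * Fps ^ (c + 2)) from coeff_succ_X_mul 0 _,
          coeff_zero_X_mul]
        have h0 : coeff 0 (Fps ^ (c + 2)) = 1 := by
          rw [coeff_zero_eq_constantCoeff_apply, map_pow]
          simp [Fps, constantCoeff_mk]
        rw [h0, ih 1]
        rw [Finset.sum_range_one, Finset.sum_range_one]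
        simp only [Nat.sub_zero, Nat.choose_zero_right, mul_one]
        rw [show 1 + c = c + 1 from by omega, show 1 + (c + 1) = (c + 1) + 1 from by omega,
          Nat.choose_succ_self_right, Nat.choose_succ_self_right]
        omega
      | (e+2) =>
        have hrec : coeff (e + 2) (Fps ^ (c + 2)) = coeff (e + 2) (Fps ^ (c + 1))
            + coeff (e + 1) (Fps ^ (c + 2)) + coeff e (Fps ^ (c + 2)) := by
          conv_lhs => rw [Fps_pow_eq]
          rw [map_add, add_mul, map_add, pow_two, mul_assoc]
          rw [show e + 2 = (e + 1) + 1 from rfl, coeff_succ_X_mul, coeff_succ_X_mul,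
            coeff_succ_X_mul]
          ring
        rw [hrec, ih (e + 2), ihd (e + 1) (by omega), ihd e (by omega), Trec]

lemma tri (s i k : ℕ) (h : k + i ≤ s) :
    s.choose k * (s - k).choose i = s.choose i * (s - i).choose k := by
  have h1 : k ≤ s := by omega
  have h2 : i ≤ s - k := by omega
  have h3 : i ≤ s := by omega
  have h4 : k ≤ s - i := by omega
  have e1 := Nat.choose_mul_factorial_mul_factorial h1
  have e2 := Nat.choose_mul_factorial_mul_factorial h2
  have e3 := Nat.choose_mul_factorial_mul_factorial h3
  have e4 := Nat.choose_mul_factorial_mul_factorial h4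
  apply Nat.eq_of_mul_eq_mul_right
    (show 0 < k.factorial * (i.factorial * (s - k - i).factorial) by positivity)
  have hs : s - i - k = s - k - i := by omega
  calc s.choose k * (s - k).choose i * (k.factorial * (i.factorial * (s - k - i).factorial))
      = (s.choose k * k.factorial) * ((s - k).choose i * i.factorial * (s - k - i).factorial) := by
        ring
    _ = s.choose k * k.factorial * (s - k).factorial := by rw [e2]
    _ = s.factorial := e1
    _ = s.choose i * i.factorial * (s - i).factorial := by rw [e3]
    _ = (s.choose i) * ((s - i).choose k * k.factorial * (s - i - k).factorial) * i.factorial := by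
        rw [e4]; ring
    _ = s.choose i * (s - i).choose k * (k.factorial * (i.factorial * (s - k - i).factorial)) := by
        rw [hs]; ring


theorem convolved_fibonacci (n k : ℕ) (hk : k ≤ n) :
    ∑ j ∈ Finset.Nat.antidiagonalTuple (k + 1) (n - k), ∏ t, Nat.fib (j t + 1)
      = ∑ i ∈ Finset.range ((n - k) / 2 + 1),
          (n - i).choose i * (n - 2 * i).choose k := by
  rw [bridge, main_formula]
  apply Finset.sum_congr rfl
  intro i hi
  rw [Finset.mem_range] at hi
  rw [show n - k + k - i = n - i from by omega,
    show n - k - i = n - i - k from by omega,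
    tri (n - i) i k (by omega),
    show n - i - i = n - 2 * i from by omega]
end

section
/- For a positive integer n and nonnegative integer k, the number of weak compositions of n into nonnegative integers with exactly k parts equal to zero satisfies cw(n,k) = 2^{n-k-1} · Σ_{i=0}^{k} 2^i · C(k+1, i) · C(n-1, k-i). -/
open Finset
open Finset

lemma wc_length_le (l : List ℕ) : l.length ≤ l.count 0 + l.sum := by
  induction l with
  | nil => simp
  | cons a t ih =>
    rcases Nat.eq_zero_or_pos a with h | h <;>
      simp [h, List.count_cons] <;> omega

instance wS_finite (n k : ℕ) : Finite {l : List ℕ // l.sum = n ∧ l.count 0 = k} := by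
  have hsub : {l : List ℕ | l.sum = n ∧ l.count 0 = k} ⊆
      (fun l : List (Fin (n + 1)) => l.map Fin.val) '' {l | l.length ≤ k + n} := by
    rintro l ⟨hs, hc⟩
    have hx : ∀ x ∈ l, x < n + 1 := by
      intro x hx
      have := List.single_le_sum (fun y _ => Nat.zero_le y) x hx
      omega
    refine ⟨l.pmap (fun x h => (⟨x, h⟩ : Fin (n + 1))) hx, ?_, ?_⟩
    · simp only [Set.mem_setOf_eq, List.length_pmap]
      have := wc_length_le l
      omega
    · simp only []
      rw [List.map_pmap]
      simp [List.pmap_eq_map]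
  exact Set.Finite.to_subtype
    (((List.finite_length_le (Fin (n + 1)) (k + n)).image _).subset hsub)

lemma wc_eq_replicate {l : List ℕ} (h : l.sum = 0) (hc : l.count 0 = k) :
    l = List.replicate k 0 := by
  have hz : ∀ x ∈ l, x = 0 := by
    intro x hx
    have := List.single_le_sum (fun y _ => Nat.zero_le y) x hx
    omega
  have hl : l = List.replicate l.length 0 := List.eq_replicate_of_mem hz
  have : l.count 0 = l.length := by
    rw [hl]; simp
  rw [hl, ← hc, this]

lemma wc_card_zero (k : ℕ) :
    Nat.card {l : List ℕ // l.sum = 0 ∧ l.count 0 = k} = 1 := by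
  rw [Nat.card_eq_one_iff_unique]
  constructor
  · constructor
    rintro ⟨l1, h1, c1⟩ ⟨l2, h2, c2⟩
    have := wc_eq_replicate h1 c1
    have := wc_eq_replicate h2 c2
    subst this; simp_all
  · exact ⟨⟨List.replicate k 0, by simp, by simp⟩⟩

def wcEquivSucc (n k : ℕ) :
    {l : List ℕ // l.sum = n + 1 ∧ l.count 0 = k + 1} ≃
      ({l : List ℕ // l.sum = n + 1 ∧ l.count 0 = k} ⊕
        Σ a : Fin (n + 1), {l : List ℕ // l.sum = n - a ∧ l.count 0 = k + 1}) where
  toFun := fun x =>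
    match x with
    | ⟨[], h⟩ => absurd h.1 (by simp)
    | ⟨0 :: t, h⟩ => Sum.inl ⟨t, by
        obtain ⟨h1, h2⟩ := h
        simp only [List.sum_cons, Nat.zero_add] at h1
        simp only [List.count_cons_self] at h2
        exact ⟨h1, by omega⟩⟩
    | ⟨(a+1) :: t, h⟩ =>
        Sum.inr ⟨⟨a, by
          obtain ⟨h1, _⟩ := h
          simp only [List.sum_cons] at h1; omega⟩, ⟨t, by
          obtain ⟨h1, h2⟩ := h
          simp only [List.sum_cons] at h1
          rw [List.count_cons_of_ne (by omega)] at h2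
          exact ⟨show t.sum = n - a by omega, h2⟩⟩⟩
  invFun := fun x =>
    match x with
    | Sum.inl ⟨t, h⟩ => ⟨0 :: t, by
        obtain ⟨h1, h2⟩ := h
        refine ⟨by simp [h1], by simp [h2]⟩⟩
    | Sum.inr ⟨a, ⟨t, h⟩⟩ => ⟨(a + 1 : ℕ) :: t, by
        obtain ⟨h1, h2⟩ := h
        have ha := a.isLt
        constructor
        · simp only [List.sum_cons, h1]; omega
        · rw [List.count_cons_of_ne (by omega)]; exact h2⟩
  left_inv := fun x =>
    match x with
    | ⟨[], h⟩ => absurd h.1 (by simp)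
    | ⟨0 :: t, h⟩ => rfl
    | ⟨(a+1) :: t, h⟩ => rfl
  right_inv := fun x =>
    match x with
    | Sum.inl ⟨t, h⟩ => rfl
    | Sum.inr ⟨a, ⟨t, h⟩⟩ => rfl

def wcEquivZero (n : ℕ) :
    {l : List ℕ // l.sum = n + 1 ∧ l.count 0 = 0} ≃
      Σ a : Fin (n + 1), {l : List ℕ // l.sum = n - a ∧ l.count 0 = 0} where
  toFun := fun x =>
    match x with
    | ⟨[], h⟩ => absurd h.1 (by simp)
    | ⟨0 :: t, h⟩ => absurd h.2 (by simp)
    | ⟨(a+1) :: t, h⟩ =>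
        ⟨⟨a, by
          obtain ⟨h1, _⟩ := h
          simp only [List.sum_cons] at h1; omega⟩, ⟨t, by
          obtain ⟨h1, h2⟩ := h
          simp only [List.sum_cons] at h1
          rw [List.count_cons_of_ne (by omega)] at h2
          exact ⟨show t.sum = n - a by omega, h2⟩⟩⟩
  invFun := fun x =>
    match x with
    | ⟨a, ⟨t, h⟩⟩ => ⟨(a + 1 : ℕ) :: t, by
        obtain ⟨h1, h2⟩ := h
        have ha := a.isLt
        constructor
        · simp only [List.sum_cons, h1]; omega
        · rw [List.count_cons_of_ne (by omega)]; exact h2⟩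
  left_inv := fun x =>
    match x with
    | ⟨[], h⟩ => absurd h.1 (by simp)
    | ⟨0 :: t, h⟩ => absurd h.2 (by simp)
    | ⟨(a+1) :: t, h⟩ => rfl
  right_inv := fun x =>
    match x with
    | ⟨a, ⟨t, h⟩⟩ => rfl

lemma wc_card_sigma (n k : ℕ) :
    Nat.card (Σ a : Fin (n + 1), {l : List ℕ // l.sum = n - ↑a ∧ l.count 0 = k})
      = ∑ s ∈ range (n + 1), Nat.card {l : List ℕ // l.sum = s ∧ l.count 0 = k} := by
  letI : ∀ a : Fin (n + 1), Fintype {l : List ℕ // l.sum = n - ↑a ∧ l.count 0 = k} :=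
    fun a => Fintype.ofFinite _
  rw [Nat.card_eq_fintype_card, Fintype.card_sigma]
  have : ∀ a : Fin (n + 1),
      Fintype.card {l : List ℕ // l.sum = n - ↑a ∧ l.count 0 = k}
        = Nat.card {l : List ℕ // l.sum = n - ↑a ∧ l.count 0 = k} :=
    fun a => (Nat.card_eq_fintype_card).symm
  rw [Finset.sum_congr rfl fun a _ => this a,
    Fin.sum_univ_eq_sum_range (fun a => Nat.card {l : List ℕ // l.sum = n - a ∧ l.count 0 = k})]
  rw [← Finset.sum_range_reflect
    (fun s => Nat.card {l : List ℕ // l.sum = s ∧ l.count 0 = k}) (n + 1)]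
  refine Finset.sum_congr rfl fun j hj => ?_
  simp only [Finset.mem_range] at hj
  have : n + 1 - 1 - j = n - j := by omega
  rw [this]

def wg (n k : ℕ) : ℕ :=
  if n = 0 then 1 else ∑ j ∈ range n, (n - 1).choose j * (j + k + 1).choose k

lemma wg_zero (k : ℕ) : wg 0 k = 1 := rfl

lemma wg_succ (n k : ℕ) :
    wg (n + 1) k = ∑ j ∈ range (n + 1), n.choose j * (j + k + 1).choose k := by
  simp [wg]

lemma wg_sum (k N : ℕ) :
    ∑ s ∈ range (N + 1), wg s k = ∑ j ∈ range (N + 1), N.choose j * (j + k).choose k := by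
  induction N with
  | zero => simp [wg]
  | succ N ih =>
    rw [Finset.sum_range_succ, ih, wg_succ,
      Finset.sum_range_succ' (fun j => (N + 1).choose j * (j + k).choose k) (N + 1)]
    have h1 : ∀ i, (N + 1).choose (i + 1) * (i + 1 + k).choose k
        = N.choose i * (i + k + 1).choose k + N.choose (i + 1) * (i + 1 + k).choose k := by
      intro i
      rw [Nat.choose_succ_succ, Nat.add_mul, Nat.add_right_comm i 1 k]
    rw [Finset.sum_congr rfl fun i _ => h1 i, Finset.sum_add_distrib]
    have h2 : ∑ i ∈ range (N + 1), N.choose (i + 1) * (i + 1 + k).choose k + 1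
        = ∑ j ∈ range (N + 1), N.choose j * (j + k).choose k := by
      have h3 := Finset.sum_range_succ' (fun j => N.choose j * (j + k).choose k) (N + 1)
      rw [Finset.sum_range_succ] at h3
      simp only [Nat.choose_self, Nat.choose_succ_self, Nat.zero_mul, Nat.add_zero,
        Nat.choose_zero_right, Nat.zero_add, Nat.one_mul] at h3
      -- h3 : ∑ range (N+1) = ∑ i ∈ range (N+1), N.choose (i+1) * (i+1+k).choose k + (0+k).choose k
      omega
    simp only [Nat.choose_zero_right, Nat.zero_add, Nat.choose_self, Nat.one_mul, Nat.mul_one]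
    omega

lemma wg_rec0 (n : ℕ) : wg (n + 1) 0 = ∑ s ∈ range (n + 1), wg s 0 := by
  rw [wg_sum, wg_succ]
  simp

lemma wg_recS (n k : ℕ) :
    wg (n + 1) (k + 1) = wg (n + 1) k + ∑ s ∈ range (n + 1), wg s (k + 1) := by
  rw [wg_sum, wg_succ, wg_succ]
  have h1 : ∀ j : ℕ, n.choose j * (j + (k + 1) + 1).choose (k + 1)
      = n.choose j * (j + k + 1).choose k + n.choose j * (j + (k + 1)).choose (k + 1) := by
    intro j
    have : j + (k + 1) + 1 = (j + k + 1) + 1 := by omega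
    rw [this, Nat.choose_succ_succ, Nat.mul_add]
    rfl
  rw [Finset.sum_congr rfl fun j _ => h1 j]
  rw [Finset.sum_add_distrib]

lemma wc_card_eq : ∀ k n : ℕ,
    Nat.card {l : List ℕ // l.sum = n ∧ l.count 0 = k} = wg n k := by
  intro k
  induction k with
  | zero =>
    intro n
    induction n using Nat.strong_induction_on with
    | _ n ih =>
      cases n with
      | zero => rw [wc_card_zero, wg_zero]
      | succ m =>
        rw [Nat.card_congr (wcEquivZero m), wc_card_sigma, wg_rec0]
        exact Finset.sum_congr rfl fun s hs => ih s (by simpa using hs)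
  | succ k ihk =>
    intro n
    induction n using Nat.strong_induction_on with
    | _ n ih =>
      cases n with
      | zero => rw [wc_card_zero, wg_zero]
      | succ m =>
        rw [Nat.card_congr (wcEquivSucc m k), Nat.card_sum, wc_card_sigma, wg_recS, ihk]
        congr 1
        exact Finset.sum_congr rfl fun s hs => ih s (by simpa using hs)

lemma wc_inner (N r : ℕ) :
    ∑ j ∈ range (N + 1), N.choose j * j.choose r = N.choose r * 2 ^ (N - r) := by
  rcases le_or_gt r N with hr | hr
  · rw [range_eq_Ico, ← Finset.sum_Ico_consecutive _ (Nat.zero_le r) (by omega : r ≤ N + 1)]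
    have h0 : ∑ j ∈ Ico 0 r, N.choose j * j.choose r = 0 := by
      apply Finset.sum_eq_zero
      intro j hj
      simp only [Finset.mem_Ico] at hj
      rw [Nat.choose_eq_zero_of_lt hj.2, Nat.mul_zero]
    rw [h0, Nat.zero_add, Finset.sum_Ico_eq_sum_range]
    have h1 : ∀ i ∈ range (N + 1 - r), N.choose (r + i) * (r + i).choose r
        = N.choose r * (N - r).choose i := by
      intro i hi
      simp only [Finset.mem_range] at hi
      have := Nat.choose_mul (n := N) (show r ≤ r + i by omega)
      rw [this]
      congr 1
      congr 1
      omega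
    rw [Finset.sum_congr rfl h1, ← Finset.mul_sum]
    congr 1
    have : N + 1 - r = (N - r) + 1 := by omega
    rw [this, Nat.sum_range_choose]
  · rw [Nat.choose_eq_zero_of_lt hr, Nat.zero_mul]
    apply Finset.sum_eq_zero
    intro j hj
    simp only [Finset.mem_range] at hj
    rw [Nat.choose_eq_zero_of_lt (show j < r by omega), Nat.mul_zero]

lemma wg_closed (N k : ℕ) :
    wg (N + 1) k
      = ∑ i ∈ range (k + 1), (k + 1).choose i * (N.choose (k - i) * 2 ^ (N - (k - i))) := by
  rw [wg_succ]
  have hV : ∀ j : ℕ, (j + k + 1).choose k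
      = ∑ i ∈ range (k + 1), (k + 1).choose i * j.choose (k - i) := by
    intro j
    have h := Nat.add_choose_eq (k + 1) j k
    rw [show k + 1 + j = j + k + 1 by omega] at h
    rw [h, Finset.Nat.sum_antidiagonal_eq_sum_range_succ_mk]
  calc ∑ j ∈ range (N + 1), N.choose j * (j + k + 1).choose k
      = ∑ j ∈ range (N + 1), ∑ i ∈ range (k + 1),
          (k + 1).choose i * (N.choose j * j.choose (k - i)) := by
        refine Finset.sum_congr rfl fun j _ => ?_
        rw [hV j, Finset.mul_sum]
        exact Finset.sum_congr rfl fun i _ => by ring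
    _ = ∑ i ∈ range (k + 1), ∑ j ∈ range (N + 1),
          (k + 1).choose i * (N.choose j * j.choose (k - i)) := Finset.sum_comm
    _ = ∑ i ∈ range (k + 1), (k + 1).choose i * (N.choose (k - i) * 2 ^ (N - (k - i))) := by
        refine Finset.sum_congr rfl fun i _ => ?_
        rw [← Finset.mul_sum, wc_inner]

theorem weakComp_unrestricted (n k : ℕ) (hn : 1 ≤ n) :
    (Nat.card {l : List ℕ // l.sum = n ∧ l.count 0 = k} : ℚ)
      = (2 : ℚ) ^ ((n : ℤ) - k - 1)
        * ∑ i ∈ Finset.range (k + 1),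
            (2 : ℚ) ^ i * ((k + 1).choose i) * ((n - 1).choose (k - i)) := by
  obtain ⟨N, rfl⟩ : ∃ N, n = N + 1 := ⟨n - 1, by omega⟩
  rw [wc_card_eq, wg_closed]
  rw [Finset.mul_sum, Nat.cast_sum]
  refine Finset.sum_congr rfl fun i hi => ?_
  simp only [Finset.mem_range] at hi
  simp only [Nat.add_sub_cancel]
  rcases le_or_gt (k - i) N with h | h
  · have h2 : (2 : ℚ) ^ ((N : ℤ) + 1 - k - 1) * 2 ^ i = 2 ^ (N - (k - i)) := by
      have hexp : (N : ℤ) + 1 - k - 1 + i = ((N - (k - i) : ℕ) : ℤ) := by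
        push_cast; omega
      rw [← zpow_natCast (2 : ℚ) i, ← zpow_add₀ (two_ne_zero), hexp, zpow_natCast]
    push_cast
    rw [← h2]
    ring
  · rw [Nat.choose_eq_zero_of_lt h]
    push_cast
    ring
end

section
/- For a positive integer n and nonnegative integer k, the number of weak compositions of n into parts from {0, 1, 2} with exactly k parts equal to zero equals Σ_{i=0}^{⌊n/2⌋} C(n+k-i, i) · C(n+k-2i, k). -/
/-- Finset of lists of length `L` with entries ≤ 2, exactly `i` twos and `k` zeros. -/
def wcA : ℕ → ℕ → ℕ → Finset (List ℕ)
  | 0, 0, 0 => {[]}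
  | 0, _+1, _ => ∅
  | 0, 0, _+1 => ∅
  | L+1, i, k =>
      ((wcA L i k).image (fun l => 1 :: l)) ∪
      ((if k = 0 then ∅ else (wcA L i (k-1)).image (fun l => 0 :: l)) ∪
       (if i = 0 then ∅ else (wcA L (i-1) k).image (fun l => 2 :: l)))

lemma wcA_zero (i k : ℕ) : wcA 0 i k = if i = 0 ∧ k = 0 then {[]} else ∅ := by
  match i, k with
  | 0, 0 => simp [wcA]
  | 0, k+1 => simp [wcA]
  | i+1, k => simp [wcA]

lemma wcA_succ (L i k : ℕ) : wcA (L+1) i k =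
      ((wcA L i k).image (fun l => 1 :: l)) ∪
      ((if k = 0 then ∅ else (wcA L i (k-1)).image (fun l => 0 :: l)) ∪
       (if i = 0 then ∅ else (wcA L (i-1) k).image (fun l => 2 :: l))) := by
  rfl

lemma mem_wcA : ∀ (L i k : ℕ) (l : List ℕ),
    l ∈ wcA L i k ↔ l.length = L ∧ (∀ x ∈ l, x ≤ 2) ∧ l.count 2 = i ∧ l.count 0 = k := by
  intro L
  induction L with
  | zero =>
    intro i k l
    rw [wcA_zero]
    split_ifs with h
    · obtain ⟨rfl, rfl⟩ := h
      constructor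
      · intro hl; simp at hl; subst hl; simp
      · intro ⟨h1, _, _, _⟩
        simp [List.length_eq_zero_iff.mp h1]
    · simp only [Finset.notMem_empty, false_iff]
      rintro ⟨h1, _, h2, h3⟩
      rw [List.length_eq_zero_iff.mp h1] at h2 h3
      simp at h2 h3
      omega
  | succ L ih =>
    intro i k l
    rw [wcA_succ]
    constructor
    · intro hmem
      rcases Finset.mem_union.mp hmem with h | hmem2
      · obtain ⟨t, ht, rfl⟩ := Finset.mem_image.mp h
        rw [ih] at ht
        obtain ⟨h1, h2, h3, h4⟩ := ht
        refine ⟨by simp [h1], ?_, by simp [h3], by simp [h4]⟩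
        intro x hx
        rcases List.mem_cons.mp hx with rfl | hx
        · omega
        · exact h2 x hx
      · rcases Finset.mem_union.mp hmem2 with h | h
        · split_ifs at h with hk
          · exact absurd h (Finset.notMem_empty _)
          obtain ⟨t, ht, rfl⟩ := Finset.mem_image.mp h
          rw [ih] at ht
          obtain ⟨h1, h2, h3, h4⟩ := ht
          refine ⟨by simp [h1], ?_, by simp [h3], by simp [h4]; omega⟩
          intro x hx
          rcases List.mem_cons.mp hx with rfl | hx
          · omega
          · exact h2 x hx
        · split_ifs at h with hi
          · exact absurd h (Finset.notMem_empty _)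
          obtain ⟨t, ht, rfl⟩ := Finset.mem_image.mp h
          rw [ih] at ht
          obtain ⟨h1, h2, h3, h4⟩ := ht
          refine ⟨by simp [h1], ?_, by simp [h3]; omega, by simp [h4]⟩
          intro x hx
          rcases List.mem_cons.mp hx with rfl | hx
          · omega
          · exact h2 x hx
    · rintro ⟨h1, h2, h3, h4⟩
      match l with
      | [] => simp at h1
      | a :: t =>
        have ha : a ≤ 2 := h2 a (by simp)
        interval_cases a
        · -- a = 0
          apply Finset.mem_union_right
          apply Finset.mem_union_left
          have hk : k ≠ 0 := by
            simp at h4; omega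
          rw [if_neg hk]
          apply Finset.mem_image.mpr
          refine ⟨t, ?_, rfl⟩
          rw [ih]
          refine ⟨by simpa using h1, fun x hx => h2 x (by simp [hx]), by simpa using h3, ?_⟩
          simp at h4; omega
        · -- a = 1
          apply Finset.mem_union_left
          apply Finset.mem_image.mpr
          refine ⟨t, ?_, rfl⟩
          rw [ih]
          refine ⟨by simpa using h1, fun x hx => h2 x (by simp [hx]), by simpa using h3,
            by simpa using h4⟩
        · -- a = 2
          apply Finset.mem_union_right
          apply Finset.mem_union_right
          have hi : i ≠ 0 := by
            simp at h3; omega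
          rw [if_neg hi]
          apply Finset.mem_image.mpr
          refine ⟨t, ?_, rfl⟩
          rw [ih]
          refine ⟨by simpa using h1, fun x hx => h2 x (by simp [hx]), ?_, by simpa using h4⟩
          simp at h3; omega

lemma wc_pascal (L i k : ℕ) :
    L.choose i * (L - i).choose k +
      ((if k = 0 then 0 else L.choose i * (L - i).choose (k-1)) +
       (if i = 0 then 0 else L.choose (i-1) * (L - (i-1)).choose k))
    = (L+1).choose i * (L + 1 - i).choose k := by
  match i, k with
  | 0, 0 => simp
  | 0, k+1 =>
    have h : (L+1).choose (k+1) = L.choose k + L.choose (k+1) := Nat.choose_succ_succ L k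
    simp only [Nat.choose_zero_right, one_mul, Nat.succ_sub_one, Nat.sub_zero,
      if_neg (Nat.succ_ne_zero k), if_pos rfl, add_zero, eq_self_iff_true, if_true,
      Nat.succ_eq_add_one]
    omega
  | i+1, k =>
    have h1 : (L+1).choose (i+1) = L.choose i + L.choose (i+1) := Nat.choose_succ_succ L i
    have h2 : L + 1 - (i+1) = L - i := by omega
    have h3 : L - (i + 1 - 1) = L - i := by omega
    rw [h2, h1, add_mul, if_neg (Nat.succ_ne_zero i), Nat.succ_sub_one]
    have key : L.choose (i+1) * (L - (i+1)).choose k +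
        (if k = 0 then 0 else L.choose (i+1) * (L - (i+1)).choose (k-1))
        = L.choose (i+1) * (L - i).choose k := by
      rcases k with _ | k
      · simp
      · rw [if_neg (Nat.succ_ne_zero k), Nat.succ_sub_one]
        rcases le_or_gt (i+1) L with hle | hlt
        · have hLi : L - i = (L - (i+1)) + 1 := by omega
          have hp : (L - (i+1) + 1).choose (k+1)
              = (L - (i+1)).choose k + (L - (i+1)).choose (k+1) :=
            Nat.choose_succ_succ _ _
          rw [hLi, hp, Nat.mul_add]
          omega
        · rw [Nat.choose_eq_zero_of_lt hlt]
          simp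
    omega

lemma card_wcA : ∀ (L i k : ℕ), (wcA L i k).card = (Nat.choose L i) * Nat.choose (L - i) k := by
  intro L
  induction L with
  | zero =>
    intro i k
    rw [wcA_zero]
    split_ifs with h
    · obtain ⟨rfl, rfl⟩ := h; simp
    · rcases Nat.eq_zero_or_pos i with rfl | hi
      · rcases Nat.eq_zero_or_pos k with rfl | hk
        · omega
        · simp [Nat.choose_eq_zero_of_lt hk]
      · simp [Nat.choose_eq_zero_of_lt hi]
  | succ L ih =>
    intro i k
    rw [wcA_succ]
    have hdisj1 : Disjoint ((wcA L i k).image (fun l => 1 :: l))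
        ((if k = 0 then ∅ else (wcA L i (k-1)).image (fun l => 0 :: l)) ∪
         (if i = 0 then ∅ else (wcA L (i-1) k).image (fun l => 2 :: l))) := by
      rw [Finset.disjoint_left]
      rintro x hx hx'
      simp only [Finset.mem_image] at hx
      obtain ⟨t, _, rfl⟩ := hx
      rcases Finset.mem_union.mp hx' with h | h <;> split_ifs at h <;>
        [skip; skip; skip; skip] <;>
        first
          | exact absurd h (Finset.notMem_empty _)
          | (obtain ⟨s, _, hs⟩ := Finset.mem_image.mp h; simp at hs)
    have hdisj2 : Disjoint (if k = 0 then ∅ else (wcA L i (k-1)).image (fun l => 0 :: l))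
        (if i = 0 then ∅ else (wcA L (i-1) k).image (fun l => 2 :: l)) := by
      rw [Finset.disjoint_left]
      rintro x hx hx'
      split_ifs at hx hx'
      all_goals first
        | exact absurd hx (Finset.notMem_empty _)
        | exact absurd hx' (Finset.notMem_empty _)
        | (obtain ⟨t, _, rfl⟩ := Finset.mem_image.mp hx
           obtain ⟨s, _, hs⟩ := Finset.mem_image.mp hx'
           simp at hs)
    rw [Finset.card_union_of_disjoint hdisj1, Finset.card_union_of_disjoint hdisj2]
    have inj1 : Function.Injective (fun l : List ℕ => 1 :: l) := fun a b h => by simpa using h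
    have inj0 : Function.Injective (fun l : List ℕ => 0 :: l) := fun a b h => by simpa using h
    have inj2 : Function.Injective (fun l : List ℕ => 2 :: l) := fun a b h => by simpa using h
    rw [Finset.card_image_of_injective _ inj1]
    have e0 : (if k = 0 then (∅:Finset (List ℕ)) else (wcA L i (k-1)).image (fun l => 0 :: l)).card
        = if k = 0 then 0 else (Nat.choose L i) * Nat.choose (L - i) (k-1) := by
      split_ifs
      · simp
      · rw [Finset.card_image_of_injective _ inj0, ih]
    have e2 : (if i = 0 then (∅:Finset (List ℕ)) else (wcA L (i-1) k).image (fun l => 2 :: l)).card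
        = if i = 0 then 0 else (Nat.choose L (i-1)) * Nat.choose (L - (i-1)) k := by
      split_ifs
      · simp
      · rw [Finset.card_image_of_injective _ inj2, ih]
    rw [e0, e2, ih]
    exact wc_pascal L i k


lemma wc_counts (l : List ℕ) (h : ∀ x ∈ l, x ≤ 2) :
    l.sum = l.count 1 + 2 * l.count 2 ∧ l.length = l.count 0 + l.count 1 + l.count 2 := by
  induction l with
  | nil => simp
  | cons a t ih =>
    have ha : a ≤ 2 := h a (by simp)
    have ih' := ih (fun x hx => h x (by simp [hx]))
    interval_cases a <;> simp [List.count_cons] <;> omega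

theorem weakComp_parts_le_two (n k : ℕ) (hn : 1 ≤ n) :
    Nat.card {l : List ℕ // l.sum = n ∧ (∀ x ∈ l, x ≤ 2) ∧ l.count 0 = k}
      = ∑ i ∈ Finset.range (n / 2 + 1),
          (n + k - i).choose i * (n + k - 2 * i).choose k := by
  set T : Finset (List ℕ) :=
    (Finset.range (n / 2 + 1)).biUnion (fun i => wcA (n + k - i) i k) with hT
  have hmem : ∀ l : List ℕ,
      (l.sum = n ∧ (∀ x ∈ l, x ≤ 2) ∧ l.count 0 = k) ↔ l ∈ T := by
    intro l
    constructor
    · rintro ⟨hs, h2, h0⟩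
      obtain ⟨hc1, hc2⟩ := wc_counts l h2
      apply Finset.mem_biUnion.mpr
      refine ⟨l.count 2, Finset.mem_range.mpr (by omega), ?_⟩
      rw [mem_wcA]
      exact ⟨by omega, h2, rfl, h0⟩
    · intro hl
      obtain ⟨i, hi, hl⟩ := Finset.mem_biUnion.mp hl
      rw [mem_wcA] at hl
      obtain ⟨h1, h2, h3, h4⟩ := hl
      obtain ⟨hc1, hc2⟩ := wc_counts l h2
      have hi' : i ≤ n / 2 := by simpa using Nat.lt_succ_iff.mp (Finset.mem_range.mp hi)
      exact ⟨by omega, h2, h4⟩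
  rw [Nat.card_congr (Equiv.subtypeEquivRight hmem), Nat.card_eq_finsetCard, hT,
    Finset.card_biUnion]
  · apply Finset.sum_congr rfl
    intro i hi
    rw [card_wcA]
    congr 1
    congr 1
    omega
  · intro i _ j _ hij
    rw [Function.onFun, Finset.disjoint_left]
    intro l hl hl'
    rw [mem_wcA] at hl hl'
    exact hij (hl.2.2.1 ▸ hl'.2.2.1)
end

section
/- Let P_n be the n×n matrix with entries equal to 1 whenever j - i ≥ k - 1 (i.e., at positions with column index exceeding row index by at least k-1), -1 on the subdiagonal (i = j+1), and 0 otherwise. Then det P_n equals the number of compositions of n in which every part is at least k. -/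
open Matrix Finset

private def Pm (k n : ℕ) : Matrix (Fin n) (Fin n) ℤ :=
  Matrix.of fun i j : Fin n =>
    if (i : ℕ) + (k - 1) ≤ (j : ℕ) then (1 : ℤ)
    else if (i : ℕ) = (j : ℕ) + 1 then -1 else 0

private lemma succAbove_val {n : ℕ} (i : Fin (n+1)) (j : Fin n) :
    ((i.succAbove j : Fin (n+1)) : ℕ) = if (j:ℕ) < (i:ℕ) then (j:ℕ) else (j:ℕ)+1 := by
  rw [Fin.succAbove]
  by_cases h : (j:ℕ) < (i:ℕ)
  · rw [if_pos (show Fin.castSucc j < i by simpa [Fin.lt_def] using h), if_pos h]; rfl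
  · rw [if_neg (show ¬ Fin.castSucc j < i by simpa [Fin.lt_def] using h), if_neg h]; rfl

private lemma minor_det (k : ℕ) (hk : 1 ≤ k) {n : ℕ} (i : Fin (n+1)) :
    ((Pm k (n+1)).submatrix i.succAbove (Fin.last n).succAbove).det
      = (-1 : ℤ) ^ (n - (i:ℕ)) * (Pm k (i:ℕ)).det := by
  have hi : (i:ℕ) ≤ n := Fin.is_le i
  have hsplit : (i:ℕ) + (n - (i:ℕ)) = n := by omega
  let e : Fin (i:ℕ) ⊕ Fin (n - (i:ℕ)) ≃ Fin n := finSumFinEquiv.trans (finCongr hsplit)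
  have hel : ∀ r : Fin (i:ℕ), ((e (Sum.inl r) : Fin n) : ℕ) = (r:ℕ) := by
    intro r; simp [e]
  have her : ∀ r : Fin (n - (i:ℕ)), ((e (Sum.inr r) : Fin n) : ℕ) = (i:ℕ) + (r:ℕ) := by
    intro r; simp [e]
  set M' := (Pm k (n+1)).submatrix i.succAbove (Fin.last n).succAbove with hM'
  have hent : ∀ x y : Fin n, M' x y
      = if ((if (x:ℕ) < (i:ℕ) then (x:ℕ) else (x:ℕ)+1)) + (k-1) ≤ (y:ℕ) then (1:ℤ)
        else if ((if (x:ℕ) < (i:ℕ) then (x:ℕ) else (x:ℕ)+1)) = (y:ℕ) + 1 then -1 else 0 := by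
    intro x y
    simp only [hM', Matrix.submatrix_apply, Fin.succAbove_last, Pm, Matrix.of_apply,
      Fin.coe_castSucc, succAbove_val]
  set C : Matrix (Fin (n - (i:ℕ))) (Fin (n - (i:ℕ))) ℤ :=
    fun r c => if (r:ℕ) + k ≤ (c:ℕ) then 1 else if (r:ℕ) = (c:ℕ) then -1 else 0 with hC
  set B : Matrix (Fin (i:ℕ)) (Fin (n - (i:ℕ))) ℤ :=
    fun r c => M' (e (Sum.inl r)) (e (Sum.inr c)) with hB
  have key : M'.submatrix e e = Matrix.fromBlocks (Pm k (i:ℕ)) B 0 C := by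
    ext x y
    cases x with
    | inl r =>
      cases y with
      | inl c =>
        simp only [Matrix.submatrix_apply, Matrix.fromBlocks_apply₁₁, hent, hel]
        have hr : (r:ℕ) < (i:ℕ) := r.isLt
        simp only [Pm, Matrix.of_apply]
        split_ifs <;> omega
      | inr c => rfl
    | inr r =>
      cases y with
      | inl c =>
        simp only [Matrix.submatrix_apply, Matrix.fromBlocks_apply₂₁, hent, hel, her,
          Matrix.zero_apply]
        have hc : (c:ℕ) < (i:ℕ) := c.isLt
        split_ifs <;> omega
      | inr c =>
        rw [Matrix.submatrix_apply, Matrix.fromBlocks_apply₂₂]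
        simp only [Matrix.submatrix_apply, Matrix.fromBlocks_apply₂₂, hent, her, hC]
        split_ifs <;> omega
  have hdet : M'.det = (Pm k (i:ℕ)).det * C.det := by
    rw [← Matrix.det_submatrix_equiv_self e M', key, Matrix.det_fromBlocks_zero₂₁]
  have hCtri : C.BlockTriangular id := by
    intro r c hrc
    simp only [id_eq] at hrc
    simp only [hC]
    have : (c:ℕ) < (r:ℕ) := hrc
    split_ifs <;> omega
  have hCdet : C.det = (-1 : ℤ) ^ (n - (i:ℕ)) := by
    rw [Matrix.det_of_upperTriangular hCtri]
    have : ∀ r : Fin (n - (i:ℕ)), C r r = -1 := by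
      intro r; simp only [hC]; split_ifs <;> omega
    simp [this]
  rw [hdet, hCdet, mul_comm]

private lemma det_rec (k : ℕ) (hk : 1 ≤ k) (n : ℕ) :
    (Pm k (n+1)).det
      = ∑ i : Fin (n+1), (if (i:ℕ) + k ≤ n+1 then (Pm k (i:ℕ)).det else 0) := by
  rw [Matrix.det_succ_column (Pm k (n+1)) (Fin.last n)]
  refine Finset.sum_congr rfl fun i _ => ?_
  rw [minor_det k hk i]
  have hi : (i:ℕ) ≤ n := Fin.is_le i
  have hval : Pm k (n+1) i (Fin.last n) = if (i:ℕ) + k ≤ n+1 then 1 else 0 := by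
    simp only [Pm, Matrix.of_apply, Fin.val_last]
    split_ifs <;> omega
  rw [hval, Fin.val_last]
  split_ifs with h
  · have hpow : ((-1:ℤ))^((i:ℕ)+n) * ((-1:ℤ))^(n-(i:ℕ)) = 1 := by
      rw [← pow_add, show (i:ℕ)+n + (n-(i:ℕ)) = 2*n by omega, pow_mul]
      norm_num
    calc (-1:ℤ)^((i:ℕ)+n) * 1 * ((-1:ℤ)^(n-(i:ℕ)) * (Pm k (i:ℕ)).det)
        = ((-1:ℤ)^((i:ℕ)+n) * (-1:ℤ)^(n-(i:ℕ))) * (Pm k (i:ℕ)).det := by ring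
      _ = (Pm k (i:ℕ)).det := by rw [hpow, one_mul]
  · ring

private lemma S_finite (k n : ℕ) (hk : 1 ≤ k) :
    Finite {l : List ℕ // l.sum = n ∧ ∀ x ∈ l, k ≤ x} := by
  apply Finite.of_injective
    (fun l => (⟨l.1, fun {i} hi => lt_of_lt_of_le hk (l.2.2 i hi), l.2.1⟩ : Composition n))
  intro a b hab
  exact Subtype.ext (congrArg Composition.blocks hab)

private lemma cons_headI_tail {l : List ℕ} (h : l ≠ []) : l.headI :: l.tail = l := by
  cases l with
  | nil => exact absurd rfl h
  | cons a t => rfl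

private lemma card_zero (k : ℕ) (hk : 1 ≤ k) :
    Nat.card {l : List ℕ // l.sum = 0 ∧ ∀ x ∈ l, k ≤ x} = 1 := by
  haveI : Unique {l : List ℕ // l.sum = 0 ∧ ∀ x ∈ l, k ≤ x} := {
    default := ⟨[], by simp⟩
    uniq := fun l => by
      apply Subtype.ext
      obtain ⟨l, hsum, hge⟩ := l
      cases l with
      | nil => rfl
      | cons a t =>
        exfalso
        have h1 : k ≤ a := hge a (by simp)
        have h2 : a + t.sum = 0 := by simpa using hsum
        omega }
  exact Nat.card_unique

private lemma card_rec (k n : ℕ) (hk : 1 ≤ k) :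
    Nat.card {l : List ℕ // l.sum = n+1 ∧ ∀ x ∈ l, k ≤ x}
      = ∑ a ∈ Finset.Icc k (n+1),
          Nat.card {l : List ℕ // l.sum = (n+1) - a ∧ ∀ x ∈ l, k ≤ x} := by
  haveI : ∀ m : ℕ, Finite {l : List ℕ // l.sum = m ∧ ∀ x ∈ l, k ≤ x} :=
    fun m => S_finite k m hk
  have E : {l : List ℕ // l.sum = n+1 ∧ ∀ x ∈ l, k ≤ x}
      ≃ Σ a : (Finset.Icc k (n+1) : Finset ℕ),
          {l : List ℕ // l.sum = (n+1) - (a:ℕ) ∧ ∀ x ∈ l, k ≤ x} := by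
    refine ⟨fun l => ?_, fun p => ?_, ?_, ?_⟩
    · have hne : l.1 ≠ [] := by
        intro h
        have := l.2.1
        rw [h] at this
        simp at this
      have hcons : l.1.headI :: l.1.tail = l.1 := cons_headI_tail hne
      have hhead : l.1.headI ∈ l.1 := by rw [← hcons]; exact List.mem_cons_self
      have hsum : l.1.headI + l.1.tail.sum = n+1 := by
        conv_rhs => rw [← l.2.1, ← hcons]
        rw [List.sum_cons]
      refine ⟨⟨l.1.headI, ?_⟩, ⟨l.1.tail, ?_, ?_⟩⟩
      · rw [Finset.mem_Icc]
        exact ⟨l.2.2 _ hhead, by omega⟩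
      · show l.1.tail.sum = (n+1) - l.1.headI
        omega
      · intro x hx
        exact l.2.2 x (by rw [← hcons]; exact List.mem_cons_of_mem _ hx)
    · obtain ⟨⟨a, ha⟩, ⟨t, ht, htge⟩⟩ := p
      rw [Finset.mem_Icc] at ha
      have ht' : t.sum = (n+1) - a := ht
      refine ⟨a :: t, ?_, ?_⟩
      · rw [List.sum_cons, ht']; omega
      · intro x hx
        rcases List.mem_cons.1 hx with h | h
        · omega
        · exact htge x h
    · intro l
      apply Subtype.ext
      exact cons_headI_tail (by
        intro h
        have := l.2.1
        rw [h] at this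
        simp at this)
    · intro p
      obtain ⟨⟨a, ha⟩, ⟨t, ht, htge⟩⟩ := p
      rfl
  rw [Nat.card_congr E]
  haveI : ∀ a : (Finset.Icc k (n+1) : Finset ℕ),
      Fintype {l : List ℕ // l.sum = (n+1) - (a:ℕ) ∧ ∀ x ∈ l, k ≤ x} :=
    fun a => Fintype.ofFinite _
  rw [Nat.card_eq_fintype_card, Fintype.card_sigma]
  rw [← Finset.sum_coe_sort (Finset.Icc k (n+1))
    (fun a => Nat.card {l : List ℕ // l.sum = (n+1) - a ∧ ∀ x ∈ l, k ≤ x})]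
  exact Finset.sum_congr rfl fun a _ => (Nat.card_eq_fintype_card).symm

private lemma main_aux (k : ℕ) (hk : 1 ≤ k) : ∀ n : ℕ,
    (Pm k n).det = (Nat.card {l : List ℕ // l.sum = n ∧ ∀ x ∈ l, k ≤ x} : ℤ) := by
  intro n
  induction n using Nat.strong_induction_on with
  | _ n ih =>
    match n with
    | 0 =>
      rw [card_zero k hk]
      simp [Matrix.det_fin_zero]
    | Nat.succ m =>
      rw [det_rec k hk m, card_rec k m hk]
      push_cast
      rw [Fin.sum_univ_eq_sum_range
        (fun i => if i + k ≤ m+1 then (Pm k i).det else 0) (m+1), ← Finset.sum_filter]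
      refine Finset.sum_nbij' (i := fun a => m+1-a) (j := fun a => m+1-a)
        ?_ ?_ ?_ ?_ ?_
      · intro a ha
        simp only [Finset.mem_filter, Finset.mem_range] at ha
        rw [Finset.mem_Icc]
        show k ≤ m+1-a ∧ m+1-a ≤ m+1
        omega
      · intro a ha
        rw [Finset.mem_Icc] at ha
        refine Finset.mem_filter.2 ⟨Finset.mem_range.2 ?_, ?_⟩
        · show m+1-a < m+1
          omega
        · show m+1-a+k ≤ m+1
          omega
      · intro a ha
        simp only [Finset.mem_filter, Finset.mem_range] at ha
        show m+1-(m+1-a) = a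
        omega
      · intro a ha
        rw [Finset.mem_Icc] at ha
        show m+1-(m+1-a) = a
        omega
      · intro a ha
        simp only [Finset.mem_filter, Finset.mem_range] at ha
        rw [show m+1-(m+1-a) = a by omega]
        exact ih a (by omega)

/-- The determinant of the n×n matrix with `1` whenever the column index exceeds the
row index by at least `k - 1`, `-1` on the subdiagonal and `0` otherwise equals the
number of compositions of `n` with all parts at least `k`. -/
theorem det_eq_card_compositions_parts_ge (n k : ℕ) (hk : 1 ≤ k) :
    (Matrix.of fun i j : Fin n =>
        if (i : ℕ) + (k - 1) ≤ (j : ℕ) then (1 : ℤ)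
        else if (i : ℕ) = (j : ℕ) + 1 then -1 else 0).det
      = (Nat.card {l : List ℕ // l.sum = n ∧ ∀ x ∈ l, k ≤ x} : ℤ) :=
  main_aux k hk n
end
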